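/- Expansion lemma: for any reverse subtableau R of shape μ (boxes possibly empty, entries in {1,...,d}) and ξ ∈ ℕ^d, (x|y)^ξ · (x|y)^R = Σ_{B} c_{ξ+1,B} · (x|y)^{ξ+ω(B^u)}, where the sum is over reverse barred subtableaux B whose unbarring equals R. -/

import Mathlib

open scoped Classical
open MvPolynomial

noncomputable section

namespace EqLR

/-- Ambient polynomial ring `ℂ[x_1,…,x_d ; y_i (i ∈ ℤ)]`.
The variables `x_j` are indexed by `Fin d` (so `x_{j+1} = X (Sum.inl j)`), and the
variables `y_i` are indexed by `ℤ` (only positive indices actually occur). -/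
abbrev P (d : ℕ) := MvPolynomial (Fin d ⊕ ℤ) ℂ

/-- The variable `y_i`. -/
def yI (d : ℕ) (i : ℤ) : P d := X (Sum.inr i)

/-- The variable `x_v` for a value `v ∈ {1,…,d}` (junk value `0` otherwise). -/
def xv (d : ℕ) (v : ℕ) : P d :=
  if h : v - 1 < d then X (Sum.inl ⟨v - 1, h⟩) else 0

/-- The component `ξ_v` of a vector `ξ ∈ ℕ^d`, for a (1-based) value `v ∈ {1,…,d}`. -/
def vecAt {d : ℕ} (ξ : Fin d → ℕ) (v : ℕ) : ℕ :=
  if h : v - 1 < d then ξ ⟨v - 1, h⟩ else 0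

/-- `μ ∈ ℕ^d` is a partition:  `μ_1 ≥ μ_2 ≥ … ≥ μ_d`. -/
def IsPartitionVec {d : ℕ} (μ : Fin d → ℕ) : Prop :=
  ∀ i j : Fin d, i ≤ j → μ j ≤ μ i

/-- `|μ| = μ_1 + ⋯ + μ_d`. -/
def wt {d : ℕ} (μ : Fin d → ℕ) : ℕ := ∑ i, μ i

/-- `ρ = (d-1, d-2, …, 0)`. -/
def rho (d : ℕ) : Fin d → ℕ := fun i => d - 1 - (i : ℕ)

/-- Cells `(r, c)` (both 0-based) of the Young/reverse Young diagram whose row `r` has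
length `μ_{r+1}`.  For the reverse diagram, rows are numbered bottom-to-top and columns
right-to-left; for the ordinary Young diagram, top-to-bottom and left-to-right. -/
def cells (d : ℕ) (μ : Fin d → ℕ) : Finset (ℕ × ℕ) :=
  (Finset.range d ×ˢ Finset.range (Finset.univ.sup μ + 1)).filter
    fun rc => ∃ h : rc.1 < d, rc.2 < μ ⟨rc.1, h⟩

/-- In the column reading word of a *reverse* diagram (columns right-to-left, i.e. in
increasing 0-based column index, each column read top-to-bottom, i.e. in decreasing
0-based row index), the cell `b` is read strictly before the cell `a`. -/
def revBefore (a b : ℕ × ℕ) : Prop := b.2 < a.2 ∨ (b.2 = a.2 ∧ a.1 < b.1)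

/-- In the column reading word of an ordinary Young diagram (rightmost column first,
each column read top-to-bottom), the cell `b` is read strictly before the cell `a`. -/
def youngBefore (a b : ℕ × ℕ) : Prop := a.2 < b.2 ∨ (b.2 = a.2 ∧ b.1 < a.1)

/-- A reverse tableau of shape `μ`: entries in `{1,…,d}`, weakly increasing along rows
(left to right) and strictly increasing down columns (top to bottom). -/
structure RevTableau (d : ℕ) (μ : Fin d → ℕ) where
  val : ℕ × ℕ → ℕ
  mem : ∀ a ∈ cells d μ, 1 ≤ val a ∧ val a ≤ d
  zero : ∀ a ∉ cells d μ, val a = 0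
  row : ∀ r c : ℕ, (r, c + 1) ∈ cells d μ → val (r, c + 1) ≤ val (r, c)
  col : ∀ r c : ℕ, (r + 1, c) ∈ cells d μ → val (r + 1, c) < val (r, c)

/-- The factor `x_v - y_{(d+1-v) + c(a) - r(a)}` attached to an entry of value `v` in
the cell `a` of the reverse diagram (`c(a) = a.2 + 1`, `r(a) = a.1 + 1`, 1-based). -/
def factor (d : ℕ) (v : ℕ) (a : ℕ × ℕ) : P d :=
  xv d v - yI d ((d : ℤ) + 1 - (v : ℤ) + (a.2 : ℤ) - (a.1 : ℤ))

/-- The factorial Schur function `s_μ(x|y) = Σ_R (x|y)^R`. -/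
def fSchur (d : ℕ) (μ : Fin d → ℕ) : P d :=
  ∑ᶠ R : RevTableau d μ, ∏ a ∈ cells d μ, factor d (R.val a) a

/-- The ordinary Schur function `s_μ(x) = Σ_R x^R`. -/
def schurX (d : ℕ) (μ : Fin d → ℕ) : P d :=
  ∑ᶠ R : RevTableau d μ, ∏ a ∈ cells d μ, xv d (R.val a)

/-- The subalgebra `ℂ[y]` of polynomials in the `y` variables only. -/
def ySub (d : ℕ) : Subalgebra ℂ (P d) :=
  Algebra.adjoin ℂ (Set.range fun i : ℤ => yI d i)

/-- `p` is symmetric in the `x` variables. -/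
def SymmX {d : ℕ} (p : P d) : Prop :=
  ∀ σ : Equiv.Perm (Fin d), rename (⇑(Equiv.sumCongr σ (Equiv.refl ℤ))) p = p

/-- The falling factorial power `(x_j | y)^k = (x_j - y_1)⋯(x_j - y_k)`. -/
def ffPow (d : ℕ) (j : Fin d) (k : ℕ) : P d :=
  ∏ i ∈ Finset.range k, (X (Sum.inl j) - yI d ((i : ℤ) + 1))

/-- `(x|y)^ξ = (x_1|y)^{ξ_1} ⋯ (x_d|y)^{ξ_d}`. -/
def xyPow (d : ℕ) (ξ : Fin d → ℕ) : P d := ∏ j : Fin d, ffPow d j (ξ j)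

/-- The alternant `a_ξ(x|y) = det[(x_j|y)^{ξ_i}]`. -/
def aDet (d : ℕ) (ξ : Fin d → ℕ) : P d :=
  Matrix.det (Matrix.of fun i j : Fin d => ffPow d j (ξ i))

/-! ### Skew barred tableaux of shape `λ*μ` -/

/-- A skew barred tableau of shape `λ*μ`: the Young diagram `λ` (placed above and to
the right of the reverse diagram `μ`) is filled with values in `{1,…,d}` (field `top`),
the reverse diagram `μ` is filled with values in `{1,…,d}` (field `bot`), some of whose
cells may be barred (field `barred`); values weakly increase along rows left-to-right
and strictly increase down columns, ignoring bars. -/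
structure SkewBarredTableau (d : ℕ) (lam mu : Fin d → ℕ) where
  top : ℕ × ℕ → ℕ
  bot : ℕ × ℕ → ℕ
  barred : ℕ × ℕ → Prop
  top_mem : ∀ a ∈ cells d lam, 1 ≤ top a ∧ top a ≤ d
  top_zero : ∀ a ∉ cells d lam, top a = 0
  bot_mem : ∀ a ∈ cells d mu, 1 ≤ bot a ∧ bot a ≤ d
  bot_zero : ∀ a ∉ cells d mu, bot a = 0
  barred_sub : ∀ a, barred a → a ∈ cells d mu
  top_row : ∀ r c : ℕ, (r, c + 1) ∈ cells d lam → top (r, c) ≤ top (r, c + 1)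
  top_col : ∀ r c : ℕ, (r + 1, c) ∈ cells d lam → top (r, c) < top (r + 1, c)
  bot_row : ∀ r c : ℕ, (r, c + 1) ∈ cells d mu → bot (r, c + 1) ≤ bot (r, c)
  bot_col : ∀ r c : ℕ, (r + 1, c) ∈ cells d mu → bot (r + 1, c) < bot (r, c)

namespace SkewBarredTableau

variable {d : ℕ} {lam mu : Fin d → ℕ}

/-- `ω(L^u_{<a})_k`: the number of `k`'s among the unbarred entries of `L` read strictly
before the `μ`-cell `a` in the unbarred column word (all of `λ` is read before `μ`). -/
def countBefore (L : SkewBarredTableau d lam mu) (a : ℕ × ℕ) (k : ℕ) : ℕ :=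
  ((cells d lam).filter fun b => L.top b = k).card +
  ((cells d mu).filter fun b => ¬ L.barred b ∧ L.bot b = k ∧ revBefore a b).card

/-- `ω(L^u_{≤a})_k`: as `countBefore`, but the entry of `a` itself is also counted when
`a` is unbarred. -/
def countUpTo (L : SkewBarredTableau d lam mu) (a : ℕ × ℕ) (k : ℕ) : ℕ :=
  ((cells d lam).filter fun b => L.top b = k).card +
  ((cells d mu).filter fun b => ¬ L.barred b ∧ L.bot b = k ∧ (revBefore a b ∨ b = a)).card

/-- Prefix content within the `λ`-part of the word. -/
def topCountUpTo (L : SkewBarredTableau d lam mu) (a : ℕ × ℕ) (k : ℕ) : ℕ :=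
  ((cells d lam).filter fun b => L.top b = k ∧ (youngBefore a b ∨ b = a)).card

/-- `ω(L^u)_k`: total content of the unbarred column word of `L`. -/
def content (L : SkewBarredTableau d lam mu) (k : ℕ) : ℕ :=
  ((cells d lam).filter fun b => L.top b = k).card +
  ((cells d mu).filter fun b => ¬ L.barred b ∧ L.bot b = k).card

/-- The unbarred column word of `L` is Yamanouchi: every prefix contains at least as
many `k`'s as `(k+1)`'s, for every `k ≥ 1`. -/
def Yamanouchi (L : SkewBarredTableau d lam mu) : Prop :=
  (∀ a ∈ cells d lam, ∀ k : ℕ, 1 ≤ k → L.topCountUpTo a (k + 1) ≤ L.topCountUpTo a k) ∧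
  (∀ a ∈ cells d mu, ¬ L.barred a → ∀ k : ℕ, 1 ≤ k →
      L.countUpTo a (k + 1) ≤ L.countUpTo a k)

/-- `L` is an equivariant Littlewood–Richardson skew tableau of shape `λ*μ` and unbarred
content `ν`. -/
def IsLR (L : SkewBarredTableau d lam mu) (ν : Fin d → ℕ) : Prop :=
  L.Yamanouchi ∧ ∀ i : Fin d, L.content ((i : ℕ) + 1) = ν i

/-- The index `|a|' + ω(L^u_{<a})_{|a|}` of the first `y` in the factor of `c_L` at a
barred cell `a`. -/
def eIdx (L : SkewBarredTableau d lam mu) (a : ℕ × ℕ) : ℤ :=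
  ((d : ℤ) + 1 - (L.bot a : ℤ)) + (L.countBefore a (L.bot a) : ℤ)

/-- The index `|a|' + c(a) - r(a)` of the second `y` in the factor of `c_L` at a barred
cell `a`. -/
def fIdx (L : SkewBarredTableau d lam mu) (a : ℕ × ℕ) : ℤ :=
  ((d : ℤ) + 1 - (L.bot a : ℤ)) + (a.2 : ℤ) - (a.1 : ℤ)

/-- The weight `c_L = ∏_{a barred} (y_{|a|'+ω(L^u_{<a})_{|a|}} - y_{|a|'+c(a)-r(a)})`. -/
def cWt (L : SkewBarredTableau d lam mu) : P d :=
  ∏ a ∈ (cells d mu).filter (fun a => L.barred a), (yI d (L.eIdx a) - yI d (L.fIdx a))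

/-- `Δ(a) = ω(L^u_{≤a})_{|a|} - c(a) + r(a)`. -/
def Δ (L : SkewBarredTableau d lam mu) (a : ℕ × ℕ) : ℤ :=
  (L.countUpTo a (L.bot a) : ℤ) - ((a.2 : ℤ) + 1) + ((a.1 : ℤ) + 1)

end SkewBarredTableau

/-! ### Reverse barred tableaux -/

/-- A reverse barred tableau of shape `μ`. -/
structure RevBarredTableau (d : ℕ) (μ : Fin d → ℕ) where
  val : ℕ × ℕ → ℕ
  barred : ℕ × ℕ → Prop
  mem : ∀ a ∈ cells d μ, 1 ≤ val a ∧ val a ≤ d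
  zero : ∀ a ∉ cells d μ, val a = 0
  barred_sub : ∀ a, barred a → a ∈ cells d μ
  row : ∀ r c : ℕ, (r, c + 1) ∈ cells d μ → val (r, c + 1) ≤ val (r, c)
  col : ∀ r c : ℕ, (r + 1, c) ∈ cells d μ → val (r + 1, c) < val (r, c)

namespace RevBarredTableau

variable {d : ℕ} {μ : Fin d → ℕ}

/-- `ω(B^u_{<a})_k`. -/
def countBefore (B : RevBarredTableau d μ) (a : ℕ × ℕ) (k : ℕ) : ℕ :=
  ((cells d μ).filter fun b => ¬ B.barred b ∧ B.val b = k ∧ revBefore a b).card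

/-- `ω(B^u_{≤a})_k` (including `a` itself when unbarred). -/
def countUpTo (B : RevBarredTableau d μ) (a : ℕ × ℕ) (k : ℕ) : ℕ :=
  ((cells d μ).filter fun b => ¬ B.barred b ∧ B.val b = k ∧ (revBefore a b ∨ b = a)).card

/-- `ω(B^u)_k`. -/
def content (B : RevBarredTableau d μ) (k : ℕ) : ℕ :=
  ((cells d μ).filter fun b => ¬ B.barred b ∧ B.val b = k).card

/-- `e_{ξ,B}(a) = (ξ + ω(B^u_{<a}))_{|a|}`. -/
def eIdx (B : RevBarredTableau d μ) (ξ : Fin d → ℕ) (a : ℕ × ℕ) : ℤ :=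
  (vecAt ξ (B.val a) : ℤ) + (B.countBefore a (B.val a) : ℤ)

/-- `f_B(a) = |a|' + c(a) - r(a)`. -/
def fIdx (B : RevBarredTableau d μ) (a : ℕ × ℕ) : ℤ :=
  ((d : ℤ) + 1 - (B.val a : ℤ)) + (a.2 : ℤ) - (a.1 : ℤ)

/-- `c_{ξ,B} = ∏_{a barred} (y_{e_{ξ,B}(a)} - y_{f_B(a)})`. -/
def cXi (B : RevBarredTableau d μ) (ξ : Fin d → ℕ) : P d :=
  ∏ a ∈ (cells d μ).filter (fun a => B.barred a), (yI d (B.eIdx ξ a) - yI d (B.fIdx a))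

/-- The unbarred column word of `λ*B` is Yamanouchi (the `λ`-part is the canonical
filling of `λ`, whose whole content `λ` is added to every prefix of `B^u`). -/
def StarYam (B : RevBarredTableau d μ) (lam : Fin d → ℕ) : Prop :=
  ∀ a ∈ cells d μ, ¬ B.barred a → ∀ k : ℕ, 1 ≤ k →
    vecAt lam (k + 1) + B.countUpTo a (k + 1) ≤ vecAt lam k + B.countUpTo a k

end RevBarredTableau

/-! ### Reverse hatted tableaux -/

/-- A hat decoration: none, left hat, or right hat. -/
inductive Hat where
  | unhatted : Hat
  | left : Hat
  | right : Hat
deriving DecidableEq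

/-- A reverse hatted tableau of shape `μ`. -/
structure RevHattedTableau (d : ℕ) (μ : Fin d → ℕ) where
  val : ℕ × ℕ → ℕ
  hat : ℕ × ℕ → Hat
  mem : ∀ a ∈ cells d μ, 1 ≤ val a ∧ val a ≤ d
  zero : ∀ a ∉ cells d μ, val a = 0
  hat_out : ∀ a ∉ cells d μ, hat a = Hat.unhatted
  row : ∀ r c : ℕ, (r, c + 1) ∈ cells d μ → val (r, c + 1) ≤ val (r, c)
  col : ∀ r c : ℕ, (r + 1, c) ∈ cells d μ → val (r + 1, c) < val (r, c)

namespace RevHattedTableau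

variable {d : ℕ} {μ : Fin d → ℕ}

/-- `ω(H^u_{<a})_k`: content of the unhatted column word of `H` read before `a`. -/
def countBefore (H : RevHattedTableau d μ) (a : ℕ × ℕ) (k : ℕ) : ℕ :=
  ((cells d μ).filter fun b => H.hat b = Hat.unhatted ∧ H.val b = k ∧ revBefore a b).card

/-- `ω(H^u)_k`. -/
def content (H : RevHattedTableau d μ) (k : ℕ) : ℕ :=
  ((cells d μ).filter fun b => H.hat b = Hat.unhatted ∧ H.val b = k).card

/-- `e_{ξ,H}(a) = (ξ + ω(H^u_{<a}))_{|a|}`. -/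
def eIdx (H : RevHattedTableau d μ) (ξ : Fin d → ℕ) (a : ℕ × ℕ) : ℤ :=
  (vecAt ξ (H.val a) : ℤ) + (H.countBefore a (H.val a) : ℤ)

/-- `f_H(a) = |a|' + c(a) - r(a)`. -/
def fIdx (H : RevHattedTableau d μ) (a : ℕ × ℕ) : ℤ :=
  ((d : ℤ) + 1 - (H.val a : ℤ)) + (a.2 : ℤ) - (a.1 : ℤ)

/-- `d_{ξ,H} = ∏_{a ∈ H^l} y_{e_{ξ,H}(a)} · ∏_{a ∈ H^r} (-y_{f_H(a)})`. -/
def dWt (H : RevHattedTableau d μ) (ξ : Fin d → ℕ) : P d :=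
  (∏ a ∈ (cells d μ).filter (fun a => H.hat a = Hat.left), yI d (H.eIdx ξ a)) *
  ∏ a ∈ (cells d μ).filter (fun a => H.hat a = Hat.right), (-(yI d (H.fIdx a)))

end RevHattedTableau

/-- `H̄ = B`: `H` unbars to the reverse barred tableau `B`. -/
def UnbarsTo {d : ℕ} {μ : Fin d → ℕ} (H : RevHattedTableau d μ)
    (B : RevBarredTableau d μ) : Prop :=
  H.val = B.val ∧ ∀ a, (H.hat a ≠ Hat.unhatted ↔ B.barred a)

/-- The simple transposition `σ_i` on values: exchanges `i` and `i+1`. -/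
def swapVal (i v : ℕ) : ℕ := if v = i then i + 1 else if v = i + 1 then i else v

/-- The action of `σ_i` on `ℕ^d` by permuting coordinates. -/
def swapVec {d : ℕ} (i : ℕ) (ξ : Fin d → ℕ) : Fin d → ℕ :=
  fun j => vecAt ξ (swapVal i ((j : ℕ) + 1))

/-! ### Reverse (barred) subtableaux -/

/-- A reverse subtableau of shape `μ`: each cell is empty (value `0`) or carries a value
in `{1,…,d}`; no row or column conditions. -/
structure RevSubTableau (d : ℕ) (μ : Fin d → ℕ) where
  val : ℕ × ℕ → ℕ
  mem : ∀ a ∈ cells d μ, val a ≤ d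
  zero : ∀ a ∉ cells d μ, val a = 0

/-- A reverse barred subtableau of shape `μ`: a reverse subtableau some of whose filled
cells are barred. -/
structure RevBarredSubTableau (d : ℕ) (μ : Fin d → ℕ) where
  val : ℕ × ℕ → ℕ
  barred : ℕ × ℕ → Prop
  mem : ∀ a ∈ cells d μ, val a ≤ d
  zero : ∀ a ∉ cells d μ, val a = 0
  barred_filled : ∀ a, barred a → a ∈ cells d μ ∧ val a ≠ 0

/-- `(x|y)^R` for a reverse subtableau `R`. -/
def RevSubTableau.xyProd {d : ℕ} {μ : Fin d → ℕ} (R : RevSubTableau d μ) : P d :=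
  ∏ a ∈ (cells d μ).filter (fun a => R.val a ≠ 0), factor d (R.val a) a

namespace RevBarredSubTableau

variable {d : ℕ} {μ : Fin d → ℕ}

/-- `ω(B^u_{<a})_k`: unbarred filled entries of value `k` read before `a`. -/
def countBefore (B : RevBarredSubTableau d μ) (a : ℕ × ℕ) (k : ℕ) : ℕ :=
  ((cells d μ).filter fun b => ¬ B.barred b ∧ B.val b = k ∧ revBefore a b).card

/-- `ω(B^u)_k`. -/
def content (B : RevBarredSubTableau d μ) (k : ℕ) : ℕ :=
  ((cells d μ).filter fun b => ¬ B.barred b ∧ B.val b = k).card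

/-- `e_{ξ,B}(a) = (ξ + ω(B^u_{<a}))_{|a|}`. -/
def eIdx (B : RevBarredSubTableau d μ) (ξ : Fin d → ℕ) (a : ℕ × ℕ) : ℤ :=
  (vecAt ξ (B.val a) : ℤ) + (B.countBefore a (B.val a) : ℤ)

/-- `f_B(a) = |a|' + c(a) - r(a)`. -/
def fIdx (B : RevBarredSubTableau d μ) (a : ℕ × ℕ) : ℤ :=
  ((d : ℤ) + 1 - (B.val a : ℤ)) + (a.2 : ℤ) - (a.1 : ℤ)

/-- `c_{ξ,B}`. -/
def cXi (B : RevBarredSubTableau d μ) (ξ : Fin d → ℕ) : P d :=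
  ∏ a ∈ (cells d μ).filter (fun a => B.barred a), (yI d (B.eIdx ξ a) - yI d (B.fIdx a))

end RevBarredSubTableau

end EqLR

namespace EqLR

section ExpansionAux

variable {d : ℕ}

/-- second `y`-index of the factor at a cell. -/
private def fI (d : ℕ) (v : ℕ × ℕ → ℕ) (a : ℕ × ℕ) : ℤ :=
  (d : ℤ) + 1 - (v a : ℤ) + (a.2 : ℤ) - (a.1 : ℤ)

/-- number of unbarred entries of value `k` (over the set `G` of unbarred filled cells). -/
private def cnt (v : ℕ × ℕ → ℕ) (G : Finset (ℕ × ℕ)) (k : ℕ) : ℕ :=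
  (G.filter fun b => v b = k).card

/-- number of unbarred entries of value `k` read before `a`. -/
private def cntB (v : ℕ × ℕ → ℕ) (G : Finset (ℕ × ℕ)) (a : ℕ × ℕ) (k : ℕ) : ℕ :=
  (G.filter fun b => v b = k ∧ revBefore a b).card

/-- first `y`-index of the factor at a barred cell. -/
private def eI (d : ℕ) (ξ : Fin d → ℕ) (v : ℕ × ℕ → ℕ) (G : Finset (ℕ × ℕ))
    (a : ℕ × ℕ) : ℤ :=
  ((vecAt ξ (v a) : ℤ) + 1) + (cntB v G a (v a) : ℤ)

private lemma cnt_insert {v : ℕ × ℕ → ℕ} {G : Finset (ℕ × ℕ)} {c : ℕ × ℕ} (hc : c ∉ G)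
    (k : ℕ) : cnt v (insert c G) k = cnt v G k + if v c = k then 1 else 0 := by
  unfold cnt
  rw [Finset.filter_insert]
  split
  · rw [Finset.card_insert_of_notMem fun h => hc (Finset.filter_subset _ _ h)]
  · simp

private lemma cntB_insert {v : ℕ × ℕ → ℕ} {G : Finset (ℕ × ℕ)} {c : ℕ × ℕ} (hc : c ∉ G)
    (a : ℕ × ℕ) (k : ℕ) :
    cntB v (insert c G) a k = cntB v G a k + if v c = k ∧ revBefore a c then 1 else 0 := by
  unfold cntB
  rw [Finset.filter_insert]
  split
  · rw [Finset.card_insert_of_notMem fun h => hc (Finset.filter_subset _ _ h)]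
  · simp

private lemma vecAt_shift (ξ : Fin d → ℕ) (v0 : ℕ) {k : ℕ} (h1 : 1 ≤ k) (h2 : k ≤ d) :
    vecAt (fun j => ξ j + if v0 = (j : ℕ) + 1 then 1 else 0) k
      = vecAt ξ k + if v0 = k then 1 else 0 := by
  have h : k - 1 < d := by omega
  rw [vecAt, vecAt, dif_pos h, dif_pos h]
  have hk : (k - 1) + 1 = k := by omega
  simp only [hk]

private lemma vecAt_succ (ξ : Fin d → ℕ) {k : ℕ} (h1 : 1 ≤ k) (h2 : k ≤ d) :
    vecAt (fun j => ξ j + 1) k = vecAt ξ k + 1 := by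
  have h : k - 1 < d := by omega
  rw [vecAt, vecAt, dif_pos h, dif_pos h]

/-- Single-box expansion identity. -/
private lemma box (ξ : Fin d → ℕ) {v0 : ℕ} (h1 : 1 ≤ v0) (h2 : v0 ≤ d) (a : ℕ × ℕ) :
    xyPow d ξ * factor d v0 a =
      xyPow d (fun j => ξ j + if v0 = (j : ℕ) + 1 then 1 else 0) +
        (yI d ((vecAt ξ v0 : ℤ) + 1) -
            yI d ((d : ℤ) + 1 - (v0 : ℤ) + (a.2 : ℤ) - (a.1 : ℤ))) *
          xyPow d ξ := by
  have hv : v0 - 1 < d := by omega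
  set j0 : Fin d := ⟨v0 - 1, hv⟩ with hj0
  have hxv : xv d v0 = X (Sum.inl j0) := by rw [xv, dif_pos hv]
  have hvec : vecAt ξ v0 = ξ j0 := by rw [vecAt, dif_pos hv]
  have hcond : ∀ j : Fin d, (v0 = (j : ℕ) + 1) ↔ j = j0 := by
    intro j
    constructor
    · intro h
      apply Fin.ext
      simp only [hj0]
      omega
    · rintro rfl
      simp only [hj0]
      omega
  have hxy : xyPow d (fun j => ξ j + if v0 = (j : ℕ) + 1 then 1 else 0) =
      (X (Sum.inl j0) - yI d ((ξ j0 : ℤ) + 1)) * xyPow d ξ := by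
    unfold xyPow
    rw [← Finset.mul_prod_erase _ _ (Finset.mem_univ j0),
        ← Finset.mul_prod_erase _ (fun j => ffPow d j (ξ j)) (Finset.mem_univ j0),
        ← mul_assoc]
    congr 1
    · have he : ξ j0 + (if v0 = (j0 : ℕ) + 1 then 1 else 0) = ξ j0 + 1 := by
        rw [if_pos ((hcond j0).mpr rfl)]
      show ffPow d j0 (ξ j0 + if v0 = (j0 : ℕ) + 1 then 1 else 0) = _
      rw [he, ffPow, Finset.prod_range_succ, ← ffPow, mul_comm]
    · refine Finset.prod_congr rfl fun j hj => ?_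
      have hne : ¬ v0 = (j : ℕ) + 1 := fun h => (Finset.mem_erase.mp hj).1 ((hcond j).mp h)
      show ffPow d j (ξ j + if v0 = (j : ℕ) + 1 then 1 else 0) = ffPow d j (ξ j)
      rw [if_neg hne, add_zero]
  rw [factor, hxv, hvec, hxy]
  ring

/-- The main expansion identity in `Finset` form. -/
private lemma key (d : ℕ) (v : ℕ × ℕ → ℕ) (F : Finset (ℕ × ℕ)) :
    (∀ a ∈ F, 1 ≤ v a ∧ v a ≤ d) → ∀ ξ : Fin d → ℕ,
    xyPow d ξ * ∏ a ∈ F, factor d (v a) a =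
      ∑ S ∈ F.powerset,
        (∏ a ∈ S, (yI d (eI d ξ v (F \ S) a) - yI d (fI d v a))) *
          xyPow d (fun j => ξ j + cnt v (F \ S) ((j : ℕ) + 1)) := by
  induction F using Finset.strongInduction with
  | _ F ih =>
  intro hv ξ
  rcases F.eq_empty_or_nonempty with rfl | hne
  · simp [cnt]
  obtain ⟨m, hmF, hmmin⟩ := F.exists_min_image (fun a => a.2) hne
  obtain ⟨c0, hc0f, hc0max⟩ :=
    (F.filter fun a => a.2 = m.2).exists_max_image (fun a => a.1)
      ⟨m, Finset.mem_filter.mpr ⟨hmF, rfl⟩⟩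
  have hc0F : c0 ∈ F := (Finset.mem_filter.mp hc0f).1
  have hc0m : c0.2 = m.2 := (Finset.mem_filter.mp hc0f).2
  have hfirst : ∀ b ∈ F, b ≠ c0 → revBefore b c0 := by
    intro b hb hbne
    rcases lt_or_ge c0.2 b.2 with h | h
    · exact Or.inl h
    · have hb2 : b.2 = c0.2 := le_antisymm h (hc0m ▸ hmmin b hb)
      have hle : b.1 ≤ c0.1 :=
        hc0max b (Finset.mem_filter.mpr ⟨hb, hb2.trans hc0m⟩)
      refine Or.inr ⟨hb2.symm, ?_⟩
      rcases hle.lt_or_eq with h' | h'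
      · exact h'
      · exact absurd (Prod.ext h' hb2) hbne
  have hnotfirst : ∀ b ∈ F, ¬ revBefore c0 b := by
    intro b hb h
    rcases h with h | ⟨h1, h2⟩
    · exact absurd (hc0m ▸ hmmin b hb) (not_le.mpr h)
    · exact absurd (hc0max b (Finset.mem_filter.mpr ⟨hb, h1.trans hc0m⟩)) (not_le.mpr h2)
  set F' : Finset (ℕ × ℕ) := F.erase c0 with hF'
  have hc0F' : c0 ∉ F' := Finset.notMem_erase _ _
  have hins : F = insert c0 F' := (Finset.insert_erase hc0F).symm
  have hss : F' ⊂ F := Finset.erase_ssubset hc0F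
  have hv' : ∀ a ∈ F', 1 ≤ v a ∧ v a ≤ d := fun a ha => hv a (Finset.mem_of_mem_erase ha)
  have hvc0 := hv c0 hc0F
  set ξ' : Fin d → ℕ := fun j => ξ j + if v c0 = (j : ℕ) + 1 then 1 else 0 with hξ'
  have ih1 := ih F' hss hv' ξ'
  have ih2 := ih F' hss hv' ξ
  set coeff : P d :=
    yI d ((vecAt ξ (v c0) : ℤ) + 1) -
      yI d ((d : ℤ) + 1 - (v c0 : ℤ) + (c0.2 : ℤ) - (c0.1 : ℤ)) with hcoeff
  have hLHS : xyPow d ξ * ∏ a ∈ F, factor d (v a) a =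
      xyPow d ξ' * ∏ a ∈ F', factor d (v a) a +
        coeff * (xyPow d ξ * ∏ a ∈ F', factor d (v a) a) := by
    rw [← Finset.mul_prod_erase F _ hc0F, ← hF', ← mul_assoc,
      box ξ hvc0.1 hvc0.2 c0]
    ring
  rw [hLHS, ih1, ih2, Finset.mul_sum]
  conv_rhs => rw [hins]
  rw [Finset.sum_powerset_insert hc0F']
  refine congrArg₂ (· + ·) ?_ ?_
  · -- terms with `c0` unbarred
    refine Finset.sum_congr rfl fun S hS => ?_
    have hSF' : S ⊆ F' := Finset.mem_powerset.mp hS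
    have hc0S : c0 ∉ S := fun h => hc0F' (hSF' h)
    have hsd : insert c0 F' \ S = insert c0 (F' \ S) :=
      Finset.insert_sdiff_of_notMem _ hc0S
    have hc0sd : c0 ∉ F' \ S := fun h => hc0F' (Finset.mem_sdiff.mp h).1
    congr 1
    · refine Finset.prod_congr rfl fun a ha => ?_
      have haF' : a ∈ F' := hSF' ha
      have haF : a ∈ F := Finset.mem_of_mem_erase haF'
      have hane : a ≠ c0 := Finset.ne_of_mem_erase haF'
      have hrb : revBefore a c0 := hfirst a haF hane
      have hva := hv a haF
      congr 2
      rw [eI, eI, hsd, cntB_insert hc0sd,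
        vecAt_shift ξ (v c0) hva.1 hva.2]
      have : (if v c0 = v a ∧ revBefore a c0 then 1 else 0) =
          (if v c0 = v a then 1 else 0) := by
        rcases eq_or_ne (v c0) (v a) with h | h <;> simp [h, hrb]
      rw [this]
      rcases eq_or_ne (v c0) (v a) with h | h <;> simp [h] <;> push_cast <;> ring
    · congr 1
      funext j
      rw [hsd, cnt_insert hc0sd]
      simp only [hξ']
      rcases eq_or_ne (v c0) ((j : ℕ) + 1) with h | h <;> simp [h] <;> omega
  · -- terms with `c0` barred
    refine Finset.sum_congr rfl fun S hS => ?_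
    have hSF' : S ⊆ F' := Finset.mem_powerset.mp hS
    have hc0S : c0 ∉ S := fun h => hc0F' (hSF' h)
    have hsd : insert c0 F' \ insert c0 S = F' \ S := by
      ext b
      simp only [Finset.mem_sdiff, Finset.mem_insert, not_or]
      constructor
      · rintro ⟨h1 | h1, h2, h3⟩
        · exact absurd h1 h2
        · exact ⟨h1, h3⟩
      · intro ⟨h1, h2⟩
        exact ⟨Or.inr h1, fun h => hc0F' (h ▸ h1), h2⟩
    rw [Finset.prod_insert hc0S, hsd]
    have he0 : eI d ξ v (F' \ S) c0 = (vecAt ξ (v c0) : ℤ) + 1 := by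
      rw [eI]
      have : cntB v (F' \ S) c0 (v c0) = 0 := by
        rw [cntB, Finset.card_eq_zero, Finset.filter_eq_empty_iff]
        intro b hb
        have hbF : b ∈ F := Finset.mem_of_mem_erase (Finset.mem_sdiff.mp hb).1
        exact fun h => hnotfirst b hbF h.2
      rw [this]
      push_cast
      ring
    rw [he0, hcoeff]
    simp only [fI]
    ring

/-- Packaging a barred-cell set into a reverse barred subtableau. -/
private def mkB {d : ℕ} {μ : Fin d → ℕ} (R : RevSubTableau d μ) (S : Finset (ℕ × ℕ)) :
    RevBarredSubTableau d μ where
  val := R.val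
  barred a := a ∈ S ∧ R.val a ≠ 0
  mem := R.mem
  zero := R.zero
  barred_filled a ha := ⟨by by_contra h; exact ha.2 (R.zero a h), ha.2⟩

private lemma RBST_ext {d : ℕ} {μ : Fin d → ℕ} {B₁ B₂ : RevBarredSubTableau d μ}
    (h1 : B₁.val = B₂.val) (h2 : B₁.barred = B₂.barred) : B₁ = B₂ := by
  cases B₁; cases B₂
  simp only at h1 h2
  subst h1; subst h2
  rfl

end ExpansionAux

/-- Expansion lemma: for a reverse subtableau `R` of shape `μ` and
`ξ ∈ ℕ^d`, `(x|y)^ξ · (x|y)^R = Σ_B c_{ξ+1,B} · (x|y)^{ξ+ω(B^u)}`, the sum over reverse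
barred subtableaux `B` whose unbarring is `R`. -/
theorem expansion_lemma (d : ℕ) (hd : 1 ≤ d) (μ : Fin d → ℕ) (hμ : IsPartitionVec μ)
    (ξ : Fin d → ℕ) (R : RevSubTableau d μ) :
    xyPow d ξ * R.xyProd =
      ∑ᶠ B ∈ {B : RevBarredSubTableau d μ | B.val = R.val},
        B.cXi (fun j => ξ j + 1) *
          xyPow d (fun j => ξ j + B.content ((j : ℕ) + 1)) := by
  classical
  set F : Finset (ℕ × ℕ) := (cells d μ).filter (fun a => R.val a ≠ 0) with hF
  have hmemF : ∀ {a : ℕ × ℕ}, a ∈ F ↔ a ∈ cells d μ ∧ R.val a ≠ 0 := by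
    intro a; rw [hF, Finset.mem_filter]
  have hvF : ∀ a ∈ F, 1 ≤ R.val a ∧ R.val a ≤ d := by
    intro a ha
    rcases hmemF.mp ha with ⟨h1, h2⟩
    exact ⟨Nat.one_le_iff_ne_zero.mpr h2, R.mem a h1⟩
  have mkB_barred : ∀ (S : Finset (ℕ × ℕ)) (a : ℕ × ℕ),
      (mkB R S).barred a ↔ (a ∈ S ∧ R.val a ≠ 0) := fun _ _ => Iff.rfl
  have mkB_val : ∀ S : Finset (ℕ × ℕ), (mkB R S).val = R.val := fun _ => rfl
  -- counting identities
  have hcb : ∀ (S : Finset (ℕ × ℕ)) (a : ℕ × ℕ) (k : ℕ), k ≠ 0 →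
      (mkB R S).countBefore a k = cntB R.val (F \ S) a k := by
    intro S a k hk
    rw [RevBarredSubTableau.countBefore, cntB]
    congr 1
    ext b
    rw [Finset.mem_filter, Finset.mem_filter, Finset.mem_sdiff]
    constructor
    · rintro ⟨hbc, hnb, hval, hrb⟩
      have hval' : R.val b = k := hval
      have hne : R.val b ≠ 0 := by rw [hval']; exact hk
      refine ⟨⟨hmemF.mpr ⟨hbc, hne⟩, fun hbS => hnb ?_⟩, hval', hrb⟩
      exact (mkB_barred S b).mpr ⟨hbS, hne⟩
    · rintro ⟨⟨hbF, hbS⟩, hval, hrb⟩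
      refine ⟨(hmemF.mp hbF).1, fun hb => hbS ((mkB_barred S b).mp hb).1, hval, hrb⟩
  have hcont : ∀ (S : Finset (ℕ × ℕ)) (k : ℕ), k ≠ 0 →
      (mkB R S).content k = cnt R.val (F \ S) k := by
    intro S k hk
    rw [RevBarredSubTableau.content, cnt]
    congr 1
    ext b
    rw [Finset.mem_filter, Finset.mem_filter, Finset.mem_sdiff]
    constructor
    · rintro ⟨hbc, hnb, hval⟩
      have hval' : R.val b = k := hval
      have hne : R.val b ≠ 0 := by rw [hval']; exact hk
      refine ⟨⟨hmemF.mpr ⟨hbc, hne⟩, fun hbS => hnb ?_⟩, hval'⟩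
      exact (mkB_barred S b).mpr ⟨hbS, hne⟩
    · rintro ⟨⟨hbF, hbS⟩, hval⟩
      exact ⟨(hmemF.mp hbF).1, fun hb => hbS ((mkB_barred S b).mp hb).1, hval⟩
  have hfilt : ∀ S : Finset (ℕ × ℕ), S ⊆ F →
      (cells d μ).filter (fun a => (mkB R S).barred a) = S := by
    intro S hSF
    ext a
    rw [Finset.mem_filter]
    constructor
    · rintro ⟨_, hb⟩
      exact ((mkB_barred S a).mp hb).1
    · intro ha
      have h := hmemF.mp (hSF ha)
      exact ⟨h.1, (mkB_barred S a).mpr ⟨ha, h.2⟩⟩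
  -- the bijection between subsets of `F` and barred subtableaux over `R`
  have hinj : Set.InjOn (mkB R) ↑F.powerset := by
    intro S hS S' hS' h
    have hSF : S ⊆ F := Finset.mem_powerset.mp hS
    have hS'F : S' ⊆ F := Finset.mem_powerset.mp hS'
    ext a
    constructor
    · intro ha
      have hne := (hmemF.mp (hSF ha)).2
      have hb : (mkB R S).barred a := (mkB_barred S a).mpr ⟨ha, hne⟩
      rw [h] at hb
      exact ((mkB_barred S' a).mp hb).1
    · intro ha
      have hne := (hmemF.mp (hS'F ha)).2
      have hb : (mkB R S').barred a := (mkB_barred S' a).mpr ⟨ha, hne⟩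
      rw [← h] at hb
      exact ((mkB_barred S a).mp hb).1
  have hset : {B : RevBarredSubTableau d μ | B.val = R.val} = mkB R '' ↑F.powerset := by
    ext B
    constructor
    · intro hB
      have hB' : B.val = R.val := hB
      refine ⟨F.filter (fun a => B.barred a),
        Finset.mem_coe.mpr (Finset.mem_powerset.mpr (Finset.filter_subset _ _)), ?_⟩
      refine RBST_ext ?_ ?_
      · exact hB'.symm
      · funext a
        apply propext
        rw [mkB_barred]
        constructor
        · rintro ⟨haf, _⟩
          exact (Finset.mem_filter.mp haf).2
        · intro h
          obtain ⟨hc, hne⟩ := B.barred_filled a h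
          rw [hB'] at hne
          exact ⟨Finset.mem_filter.mpr ⟨hmemF.mpr ⟨hc, hne⟩, h⟩, hne⟩
    · rintro ⟨S, hS, rfl⟩
      exact mkB_val S
  rw [hset, finsum_mem_image hinj, finsum_mem_coe_finset]
  have hkey := key d R.val F hvF ξ
  rw [RevSubTableau.xyProd, ← hF, hkey]
  refine Finset.sum_congr rfl fun S hS => ?_
  have hSF : S ⊆ F := Finset.mem_powerset.mp hS
  rw [RevBarredSubTableau.cXi, hfilt S hSF]
  congr 1
  · refine Finset.prod_congr rfl fun a ha => ?_
    have haF := hSF ha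
    have hva := hvF a haF
    have heq : (mkB R S).eIdx (fun j => ξ j + 1) a = eI d ξ R.val (F \ S) a := by
      rw [RevBarredSubTableau.eIdx, eI, mkB_val,
        hcb S a (R.val a) (Nat.one_le_iff_ne_zero.mp hva.1),
        vecAt_succ ξ hva.1 hva.2]
      push_cast
      ring
    have hfq : (mkB R S).fIdx a = fI d R.val a := rfl
    rw [heq, hfq]
  · congr 1
    funext j
    rw [hcont S ((j : ℕ) + 1) (by omega)]

end EqLR
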